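/- For every N ≥ 1, the sandpile group G_{Γ_N} on an N×N square domain Γ_N ⊂ ℤ² contains a subgroup isomorphic to the direct sum of N copies of the cyclic group ℤ/4ℤ. -/

import Mathlib

/-- Two vertices of `ℤ²` are adjacent iff their Euclidean distance is `1`. -/
def adj (u v : ℤ × ℤ) : Prop := (u.1 - v.1) ^ 2 + (u.2 - v.2) ^ 2 = 1

instance : DecidableRel adj := fun u v => by unfold adj; infer_instance

/-- The reduced Laplacian of a finite domain `Γ ⊂ ℤ²`. -/
def lap {R : Type*} [CommRing R] (Γ : Finset (ℤ × ℤ)) (f : ↥Γ → R) : ↥Γ → R :=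
  fun v => (∑ w ∈ Γ.attach.filter (fun w => adj w.1 v.1), f w) - 4 * f v

lemma lap_add {R : Type*} [CommRing R] (Γ : Finset (ℤ × ℤ)) (f g : ↥Γ → R) :
    lap Γ (f + g) = lap Γ f + lap Γ g := by
  funext v; simp [lap, Finset.sum_add_distrib]; ring

lemma lap_neg {R : Type*} [CommRing R] (Γ : Finset (ℤ × ℤ)) (f : ↥Γ → R) :
    lap Γ (-f) = -(lap Γ f) := by
  funext v; simp [lap]; ring

lemma lap_smul {R : Type*} [CommRing R] (Γ : Finset (ℤ × ℤ)) (c : R) (f : ↥Γ → R) :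
    lap Γ (c • f) = c • lap Γ f := by
  funext v
  simp only [lap, Pi.smul_apply, smul_eq_mul, mul_sub, Finset.mul_sum]
  ring

lemma lap_zero {R : Type*} [CommRing R] (Γ : Finset (ℤ × ℤ)) :
    lap Γ (0 : ↥Γ → R) = 0 := by
  funext v; simp [lap]

/-- The boundary `∂Γ`: vertices of `Γ` adjacent to some vertex of `ℤ² \ Γ`. -/
noncomputable def boundary (Γ : Finset (ℤ × ℤ)) : Finset (ℤ × ℤ) :=
  @Finset.filter _ (fun v => ∃ w : ℤ × ℤ, w ∉ Γ ∧ adj w v) (Classical.decPred _) Γ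

lemma boundary_subset (Γ : Finset (ℤ × ℤ)) : boundary Γ ⊆ Γ :=
  @Finset.filter_subset _ (fun v => ∃ w : ℤ × ℤ, w ∉ Γ ∧ adj w v) (Classical.decPred _) Γ

/-- A function on `Γ` is harmonic if its Laplacian vanishes on the interior `Γ \ ∂Γ`. -/
def Harmonic {R : Type*} [CommRing R] (Γ : Finset (ℤ × ℤ)) (f : ↥Γ → R) : Prop :=
  ∀ v : ↥Γ, (v : ℤ × ℤ) ∉ boundary Γ → lap Γ f v = 0

/-- `Γ ⊂ ℤ²` is a convex domain if it is the set of lattice points of a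
convex open subset of `ℝ²`. -/
def IsConvexDomain (Γ : Finset (ℤ × ℤ)) : Prop :=
  ∃ P : Set (ℝ × ℝ), Convex ℝ P ∧ IsOpen P ∧
    ∀ v : ℤ × ℤ, v ∈ Γ ↔ ((v.1 : ℝ), (v.2 : ℝ)) ∈ P

/-- The reduced Laplacian as an additive group homomorphism on `ℤ^Γ`. -/
def lapHom (Γ : Finset (ℤ × ℤ)) : (↥Γ → ℤ) →+ (↥Γ → ℤ) where
  toFun := lap Γ
  map_zero' := lap_zero Γ
  map_add' := lap_add Γ

/-- The sandpile group `G_Γ = ℤ^Γ / Δ_Γ(ℤ^Γ)`. -/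
def SandpileGroup (Γ : Finset (ℤ × ℤ)) : Type :=
  (↥Γ → ℤ) ⧸ (lapHom Γ).range

instance (Γ : Finset (ℤ × ℤ)) : AddCommGroup (SandpileGroup Γ) :=
  inferInstanceAs (AddCommGroup ((↥Γ → ℤ) ⧸ (lapHom Γ).range))

/-- The canonical projection `ℤ^Γ → G_Γ`. -/
def sandMk (Γ : Finset (ℤ × ℤ)) : (↥Γ → ℤ) →+ SandpileGroup Γ :=
  QuotientAddGroup.mk' _

/-- The `N×N` square domain `Γ_N = {1, …, N} × {1, …, N} ⊂ ℤ²`. -/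
noncomputable def squareDomain (N : ℕ) : Finset (ℤ × ℤ) :=
  Finset.Icc 1 (N : ℤ) ×ˢ Finset.Icc 1 (N : ℤ)

lemma sq_sum_one {x y : ℤ} (h : x ^ 2 + y ^ 2 = 1) :
    (x = 1 ∧ y = 0) ∨ (x = -1 ∧ y = 0) ∨ (x = 0 ∧ y = 1) ∨ (x = 0 ∧ y = -1) := by
  have hx1 : -1 ≤ x := by nlinarith [sq_nonneg y, sq_nonneg (x + 1)]
  have hx2 : x ≤ 1 := by nlinarith [sq_nonneg y, sq_nonneg (x - 1)]
  have hy1 : -1 ≤ y := by nlinarith [sq_nonneg x, sq_nonneg (y + 1)]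
  have hy2 : y ≤ 1 := by nlinarith [sq_nonneg x, sq_nonneg (y - 1)]
  have hx : x = -1 ∨ x = 0 ∨ x = 1 := by omega
  rcases hx with hx | hx | hx <;> subst hx <;> simp_all <;> omega
  
-- adjacency characterization
lemma adj_iff (w v : ℤ × ℤ) : adj w v ↔
    w = (v.1 + 1, v.2) ∨ w = (v.1 - 1, v.2) ∨ w = (v.1, v.2 + 1) ∨ w = (v.1, v.2 - 1) := by
  unfold adj
  constructor
  · intro h
    rcases sq_sum_one h with ⟨h1, h2⟩ | ⟨h1, h2⟩ | ⟨h1, h2⟩ | ⟨h1, h2⟩ <;>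
      simp only [Prod.ext_iff] <;> omega
  · rintro (h | h | h | h) <;> subst h <;> ring

lemma adj_symm {w v : ℤ × ℤ} (h : adj w v) : adj v w := by
  unfold adj at *; ring_nf at *; linarith

/-- extension by zero -/
def ext' {R : Type*} [CommRing R] (Γ : Finset (ℤ × ℤ)) (f : ↥Γ → R) : ℤ × ℤ → R :=
  fun w => if h : w ∈ Γ then f ⟨w, h⟩ else 0

lemma ext'_eq_zero {R : Type*} [CommRing R] (Γ : Finset (ℤ × ℤ)) (f : ↥Γ → R)
    {w : ℤ × ℤ} (h : w ∉ Γ) : ext' Γ f w = 0 := dif_neg h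

/-- neighbor sum as four explicit terms -/
lemma nbr_sum {R : Type*} [CommRing R] (Γ : Finset (ℤ × ℤ)) (f : ↥Γ → R) (v : ℤ × ℤ) :
    (∑ w ∈ Γ.attach.filter (fun w => adj w.1 v), f w) =
      ext' Γ f (v.1 + 1, v.2) + ext' Γ f (v.1 - 1, v.2) +
      ext' Γ f (v.1, v.2 + 1) + ext' Γ f (v.1, v.2 - 1) := by
  classical
  have step1 : (∑ w ∈ Γ.attach.filter (fun w => adj w.1 v), f w)
      = ∑ w ∈ Γ.filter (fun w => adj w v), ext' Γ f w := by
    rw [Finset.sum_filter, Finset.sum_filter]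
    rw [← Finset.sum_attach (Γ) (fun w => if adj w v then ext' Γ f w else 0)]
    apply Finset.sum_congr rfl
    intro w _
    by_cases h : adj w.1 v
    · simp only [h, if_true, ext', dif_pos w.2]
    · simp [h]
  rw [step1]
  have hset : Γ.filter (fun w => adj w v) =
      ({(v.1 + 1, v.2), (v.1 - 1, v.2), (v.1, v.2 + 1), (v.1, v.2 - 1)} : Finset (ℤ × ℤ)).filter
        (fun w => w ∈ Γ) := by
    ext w
    simp only [Finset.mem_filter, Finset.mem_insert, Finset.mem_singleton, ← adj_iff]
    tauto
  rw [hset, Finset.sum_filter]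
  have d1 : ((v.1 + 1, v.2) : ℤ × ℤ) ≠ (v.1 - 1, v.2) := by simp only [ne_eq, Prod.mk.injEq, not_and]; omega
  have d2 : ((v.1 + 1, v.2) : ℤ × ℤ) ≠ (v.1, v.2 + 1) := by simp only [ne_eq, Prod.mk.injEq, not_and]; omega
  have d3 : ((v.1 + 1, v.2) : ℤ × ℤ) ≠ (v.1, v.2 - 1) := by simp only [ne_eq, Prod.mk.injEq, not_and]; omega
  have d4 : ((v.1 - 1, v.2) : ℤ × ℤ) ≠ (v.1, v.2 + 1) := by simp only [ne_eq, Prod.mk.injEq, not_and]; omega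
  have d5 : ((v.1 - 1, v.2) : ℤ × ℤ) ≠ (v.1, v.2 - 1) := by simp only [ne_eq, Prod.mk.injEq, not_and]; omega
  have d6 : ((v.1, v.2 + 1) : ℤ × ℤ) ≠ (v.1, v.2 - 1) := by simp only [ne_eq, Prod.mk.injEq, not_and]; omega
  rw [Finset.sum_insert (by simp [d1, d2, d3]), Finset.sum_insert (by simp [d4, d5]),
    Finset.sum_insert (by simp [d6]), Finset.sum_singleton]
  have key : ∀ w : ℤ × ℤ, (if w ∈ Γ then ext' Γ f w else 0) = ext' Γ f w := by
    intro w
    by_cases h : w ∈ Γ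
    · simp [h]
    · simp [h, ext'_eq_zero Γ f h]
  rw [key, key, key, key]
  ring

/-- lap in terms of the extension -/
lemma lap_eq_ext {R : Type*} [CommRing R] (Γ : Finset (ℤ × ℤ)) (f : ↥Γ → R) (v : ↥Γ) :
    lap Γ f v = ext' Γ f (v.1.1 + 1, v.1.2) + ext' Γ f (v.1.1 - 1, v.1.2) +
      ext' Γ f (v.1.1, v.1.2 + 1) + ext' Γ f (v.1.1, v.1.2 - 1) - 4 * f v := by
  unfold lap
  rw [nbr_sum]


lemma adj_symm' (w v : ℤ × ℤ) : adj w v ↔ adj v w := ⟨adj_symm, adj_symm⟩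

-- real part 2 starts here
lemma mem_squareDomain (N : ℕ) (w : ℤ × ℤ) :
    w ∈ squareDomain N ↔ 1 ≤ w.1 ∧ w.1 ≤ (N : ℤ) ∧ 1 ≤ w.2 ∧ w.2 ≤ (N : ℤ) := by
  simp [squareDomain, Finset.mem_product, Finset.mem_Icc]; tauto

lemma max_principle_half (N : ℕ) (hN : 1 ≤ N) (f : ↥(squareDomain N) → ℚ)
    (hf : lap (squareDomain N) f = 0) : ∀ v, f v ≤ 0 := by
  have h11 : ((1, 1) : ℤ × ℤ) ∈ squareDomain N := by
    simp [mem_squareDomain]; omega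
  have hne : (Finset.univ : Finset ↥(squareDomain N)).Nonempty := ⟨⟨(1, 1), h11⟩, Finset.mem_univ _⟩
  obtain ⟨v₀, _, hmax⟩ := Finset.exists_max_image Finset.univ f hne
  set m := f v₀ with hm
  by_contra hcon
  push_neg at hcon
  obtain ⟨v₁, hv₁⟩ := hcon
  have hm0 : 0 < m := lt_of_lt_of_le hv₁ (hmax v₁ (Finset.mem_univ _))
  have hle : ∀ w : ℤ × ℤ, ext' (squareDomain N) f w ≤ m := by
    intro w
    unfold ext'
    split
    · exact hmax _ (Finset.mem_univ _)
    · exact le_of_lt hm0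
  have step : ∀ v : ↥(squareDomain N), f v = m →
      ∃ h1 : ((v.1.1 + 1, v.1.2) : ℤ × ℤ) ∈ squareDomain N, f ⟨(v.1.1 + 1, v.1.2), h1⟩ = m := by
    intro v hv
    have h0 : lap (squareDomain N) f v = 0 := by rw [hf]; rfl
    rw [lap_eq_ext] at h0
    have hE : ext' (squareDomain N) f (v.1.1 + 1, v.1.2) = m := by
      have := hle (v.1.1 + 1, v.1.2)
      have := hle (v.1.1 - 1, v.1.2)
      have := hle (v.1.1, v.1.2 + 1)
      have := hle (v.1.1, v.1.2 - 1)
      rw [hv] at h0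
      linarith
    by_cases hmem : ((v.1.1 + 1, v.1.2) : ℤ × ℤ) ∈ squareDomain N
    · refine ⟨hmem, ?_⟩
      rw [← hE]; unfold ext'; rw [dif_pos hmem]
    · exfalso
      unfold ext' at hE
      rw [dif_neg hmem] at hE
      exact absurd hE.symm (ne_of_gt hm0)
  have iter : ∀ k : ℕ, ∃ v : ↥(squareDomain N), f v = m ∧ 1 + (k : ℤ) ≤ v.1.1 := by
    intro k
    induction k with
    | zero =>
      refine ⟨v₀, rfl, ?_⟩
      have := (mem_squareDomain N v₀.1).mp v₀.2
      push_cast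
      omega
    | succ n ih =>
      obtain ⟨v, hvm, hvc⟩ := ih
      obtain ⟨h1, h2⟩ := step v hvm
      refine ⟨⟨(v.1.1 + 1, v.1.2), h1⟩, h2, ?_⟩
      have hcoord : ((⟨(v.1.1 + 1, v.1.2), h1⟩ : ↥(squareDomain N))).1.1 = v.1.1 + 1 := rfl
      rw [hcoord]
      push_cast
      push_cast at hvc
      omega
  obtain ⟨v, _, hvc⟩ := iter N
  have := (mem_squareDomain N v.1).mp v.2
  omega

lemma max_principle (N : ℕ) (hN : 1 ≤ N) (f : ↥(squareDomain N) → ℚ)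
    (hf : lap (squareDomain N) f = 0) : f = 0 := by
  have h1 := max_principle_half N hN f hf
  have h2 := max_principle_half N hN (-f) (by rw [lap_neg, hf]; simp)
  funext v
  have := h1 v
  have := h2 v
  simp only [Pi.neg_apply, neg_nonpos] at *
  simp only [Pi.zero_apply]
  linarith

-- part 3: matrix and finiteness
def Lmat (Γ : Finset (ℤ × ℤ)) (R : Type*) [CommRing R] : Matrix ↥Γ ↥Γ R :=
  fun v w => (if adj w.1 v.1 then 1 else 0) - (if w = v then 4 else 0)

lemma lap_eq_mulVec {R : Type*} [CommRing R] (Γ : Finset (ℤ × ℤ)) (f : ↥Γ → R) :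
    lap Γ f = (Lmat Γ R).mulVec f := by
  classical
  funext v
  unfold lap Matrix.mulVec Lmat
  simp only [Matrix.mulVec, dotProduct]
  have expand : ∀ w : ↥Γ,
      ((if adj w.1 v.1 then (1:R) else 0) - (if w = v then 4 else 0)) * f w
      = (if adj w.1 v.1 then f w else 0) - (if w = v then 4 * f w else 0) := by
    intro w; split_ifs <;> ring
  rw [Finset.sum_congr rfl (fun w _ => expand w), Finset.sum_sub_distrib]
  have h2 : (∑ w : ↥Γ, if w = v then 4 * f w else 0) = 4 * f v := by
    rw [Finset.sum_ite_eq' Finset.univ v (fun w => 4 * f w)]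
    simp
  rw [h2, ← Finset.sum_filter, Finset.univ_eq_attach]

lemma Lmat_map (Γ : Finset (ℤ × ℤ)) :
    (Int.castRingHom ℚ).mapMatrix (Lmat Γ ℤ) = Lmat Γ ℚ := by
  ext v w
  simp only [RingHom.mapMatrix_apply, Matrix.map_apply, Lmat]
  push_cast
  split_ifs <;> norm_num

lemma det_ne_zero (N : ℕ) (hN : 1 ≤ N) : (Lmat (squareDomain N) ℤ).det ≠ 0 := by
  classical
  have hq : (Lmat (squareDomain N) ℚ).det ≠ 0 := by
    intro h
    obtain ⟨g, hg, hg0⟩ := (Matrix.exists_mulVec_eq_zero_iff).mpr h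
    apply hg
    apply max_principle N hN
    rw [lap_eq_mulVec, hg0]
  intro h
  apply hq
  rw [← Lmat_map, ← RingHom.map_det, h]
  simp

lemma det_smul_mem_range (N : ℕ) (f : ↥(squareDomain N) → ℤ) :
    (Lmat (squareDomain N) ℤ).det • f ∈ (lapHom (squareDomain N)).range := by
  classical
  refine ⟨(Lmat (squareDomain N) ℤ).adjugate.mulVec f, ?_⟩
  show lap _ _ = _
  rw [lap_eq_mulVec, Matrix.mulVec_mulVec, Matrix.mul_adjugate, Matrix.smul_mulVec,
    Matrix.one_mulVec]

instance sandpile_module (Γ : Finset (ℤ × ℤ)) : Module ℤ (SandpileGroup Γ) :=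
  AddCommGroup.toIntModule _

lemma sandpile_finite (N : ℕ) (hN : 1 ≤ N) : Finite (SandpileGroup (squareDomain N)) := by
  classical
  have hsur : Function.Surjective (sandMk (squareDomain N)) := QuotientAddGroup.mk'_surjective _
  have : Module.Finite ℤ (SandpileGroup (squareDomain N)) :=
    Module.Finite.of_surjective ((sandMk (squareDomain N)).toIntLinearMap) hsur
  apply Module.finite_of_fg_torsion
  intro x
  obtain ⟨f, rfl⟩ := hsur x
  refine ⟨⟨(Lmat (squareDomain N) ℤ).det, mem_nonZeroDivisors_of_ne_zero (det_ne_zero N hN)⟩, ?_⟩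
  show (Lmat (squareDomain N) ℤ).det • (sandMk (squareDomain N) f) = 0
  rw [← map_zsmul]
  show QuotientAddGroup.mk' _ ((Lmat (squareDomain N) ℤ).det • f) = 0
  rw [QuotientAddGroup.mk'_apply, QuotientAddGroup.eq_zero_iff]
  exact det_smul_mem_range N f

def cInd (N : ℕ) (k : ℤ) (w : ℤ × ℤ) : ℤ :=
  if (w.2 - w.1 < k ∧ w.1 - w.2 < k ∧ k < w.1 + w.2 ∧ w.1 + w.2 < 2*(N:ℤ) + 2 - k
      ∧ (w.1 + w.2 + k) % 2 = 1) then 1 else 0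

def sgn (b : ℤ) : ℤ := if b % 2 = 0 then 1 else -1

def hfun (N : ℕ) (k : ℤ) (w : ℤ × ℤ) : ℤ := sgn w.2 * cInd N k w

lemma sgn_succ (b : ℤ) : sgn (b + 1) = -sgn b := by
  unfold sgn; split_ifs <;> omega

lemma sgn_pred (b : ℤ) : sgn (b - 1) = -sgn b := by
  unfold sgn; split_ifs <;> omega

lemma cInd_bracket (N : ℕ) (k : ℤ) (hk1 : 1 ≤ k) (hk2 : k ≤ (N:ℤ)) (a b : ℤ)
    (ha1 : 1 ≤ a) (ha2 : a ≤ (N:ℤ)) (hb1 : 1 ≤ b) (hb2 : b ≤ (N:ℤ)) :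
    cInd N k (a+1, b) + cInd N k (a-1, b) - cInd N k (a, b+1) - cInd N k (a, b-1) = 0 := by
  unfold cInd
  split_ifs <;> omega

lemma hfun_four (N : ℕ) (k : ℤ) (hk1 : 1 ≤ k) (hk2 : k ≤ (N:ℤ)) (a b : ℤ)
    (ha1 : 1 ≤ a) (ha2 : a ≤ (N:ℤ)) (hb1 : 1 ≤ b) (hb2 : b ≤ (N:ℤ)) :
    hfun N k (a+1, b) + hfun N k (a-1, b) + hfun N k (a, b+1) + hfun N k (a, b-1) = 0 := by
  unfold hfun
  have e1 : sgn ((a+1,b).2) = sgn b := rfl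
  have e2 : sgn ((a-1,b).2) = sgn b := rfl
  have e3 : sgn ((a,b+1).2) = -sgn b := sgn_succ b
  have e4 : sgn ((a,b-1).2) = -sgn b := sgn_pred b
  rw [e1, e2, e3, e4]
  have := cInd_bracket N k hk1 hk2 a b ha1 ha2 hb1 hb2
  linear_combination (sgn b) * this

lemma hfun_support (N : ℕ) (k : ℤ) (w : ℤ × ℤ)
    (h : ¬(1 ≤ w.1 ∧ w.1 ≤ (N:ℤ) ∧ 1 ≤ w.2 ∧ w.2 ≤ (N:ℤ))) : hfun N k w = 0 := by
  unfold hfun cInd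
  split_ifs with hc
  · exfalso; omega
  · ring

lemma hfun_delta (N : ℕ) (k j : ℤ) (hk1 : 1 ≤ k) (hk2 : k ≤ (N:ℤ))
    (hj1 : 1 ≤ j) (hj2 : j ≤ (N:ℤ)) :
    hfun N k (j, 1) = if k = j then -1 else 0 := by
  unfold hfun sgn cInd
  dsimp only
  split_ifs <;> omega

-- part 5
variable (N : ℕ)

/-- `hfun` restricted to the domain -/
def hsub (k : Fin N) : ↥(squareDomain N) → ℤ := fun v => hfun N ((k : ℕ) + 1) v.1

lemma ext'_hsub (k : Fin N) (w : ℤ × ℤ) :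
    ext' (squareDomain N) (hsub N k) w = hfun N ((k : ℕ) + 1) w := by
  unfold ext'
  split
  · rfl
  · rw [hfun_support]
    intro hc
    simp_all [mem_squareDomain]

lemma hsub_nbr_zero (k : Fin N) (w : ↥(squareDomain N)) :
    (∑ v ∈ (squareDomain N).attach.filter (fun v => adj v.1 w.1), hsub N k v) = 0 := by
  rw [nbr_sum, ext'_hsub, ext'_hsub, ext'_hsub, ext'_hsub]
  have hw := (mem_squareDomain N w.1).mp w.2
  have hk1 : (1 : ℤ) ≤ ((k : ℕ) : ℤ) + 1 := by omega
  have hk2 : ((k : ℕ) : ℤ) + 1 ≤ (N : ℤ) := by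
    have := k.2
    omega
  have := hfun_four N ((k : ℕ) + 1) (by exact_mod_cast hk1) (by exact_mod_cast hk2)
      w.1.1 w.1.2 hw.1 hw.2.1 hw.2.2.1 hw.2.2.2
  push_cast at this ⊢
  linarith [this]

/-- integer pairing -/
noncomputable def chiInt (f : ↥(squareDomain N) → ℤ) (k : Fin N) : ℤ :=
  ∑ v ∈ (squareDomain N).attach, hsub N k v * f v

lemma chiInt_lap (f : ↥(squareDomain N) → ℤ) (k : Fin N) :
    chiInt N (lap (squareDomain N) f) k = -4 * chiInt N f k := by
  unfold chiInt lap
  have expand : ∀ v ∈ (squareDomain N).attach, hsub N k v *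
        ((∑ w ∈ (squareDomain N).attach.filter (fun w => adj w.1 v.1), f w) - 4 * f v)
      = (∑ w ∈ (squareDomain N).attach, if adj w.1 v.1 then hsub N k v * f w else 0)
        - 4 * (hsub N k v * f v) := by
    intro v _
    rw [← Finset.sum_filter, ← Finset.mul_sum]
    ring
  rw [Finset.sum_congr rfl expand, Finset.sum_sub_distrib, Finset.sum_comm]
  have inner : ∀ w ∈ (squareDomain N).attach,
      (∑ v ∈ (squareDomain N).attach, if adj w.1 v.1 then hsub N k v * f w else 0) = 0 := by
    intro w _
    have congr1 : ∀ v ∈ (squareDomain N).attach,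
        (if adj w.1 v.1 then hsub N k v * f w else 0)
          = (if adj v.1 w.1 then hsub N k v else 0) * f w := by
      intro v _
      have hiff := adj_symm' w.1 v.1
      by_cases h : adj w.1 v.1
      · rw [if_pos h, if_pos (hiff.mp h)]
      · rw [if_neg h, if_neg (fun hc => h (hiff.mpr hc)), zero_mul]
    rw [Finset.sum_congr rfl congr1, ← Finset.sum_mul, ← Finset.sum_filter,
      hsub_nbr_zero N k w, zero_mul]
  rw [Finset.sum_congr rfl inner, Finset.sum_const_zero, zero_sub, ← Finset.mul_sum]
  ring

/-- the homomorphism to `(ZMod 4)^N` -/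
noncomputable def chiHom : (↥(squareDomain N) → ℤ) →+ (Fin N → ZMod 4) where
  toFun f := fun k => ((chiInt N f k : ℤ) : ZMod 4)
  map_zero' := by
    funext k
    simp [chiInt]
  map_add' f g := by
    funext k
    show ((chiInt N (f + g) k : ℤ) : ZMod 4)
        = ((chiInt N f k : ℤ) : ZMod 4) + ((chiInt N g k : ℤ) : ZMod 4)
    have : chiInt N (f + g) k = chiInt N f k + chiInt N g k := by
      unfold chiInt
      rw [← Finset.sum_add_distrib]
      apply Finset.sum_congr rfl
      intro v _
      simp [mul_add]
    rw [this]
    push_cast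
    ring

lemma chiHom_lap (f : ↥(squareDomain N) → ℤ) : chiHom N (lap (squareDomain N) f) = 0 := by
  funext k
  show ((chiInt N (lap (squareDomain N) f) k : ℤ) : ZMod 4) = 0
  rw [chiInt_lap]
  push_cast
  have h4 : ((-4 : ℤ) : ZMod 4) = 0 := by decide
  push_cast at h4
  rw [h4, zero_mul]

/-- delta function at `(j+1, 1)` -/
def gdel (j : Fin N) : ↥(squareDomain N) → ℤ :=
  fun v => if v.1 = ((((j : ℕ) : ℤ) + 1, 1) : ℤ × ℤ) then -1 else 0

lemma pt_mem (j : Fin N) : (((((j : ℕ) : ℤ)) + 1, 1) : ℤ × ℤ) ∈ squareDomain N := by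
  rw [mem_squareDomain]
  dsimp only
  have := j.2
  refine ⟨by omega, by omega, by omega, by omega⟩

lemma chiInt_gdel (j k : Fin N) :
    chiInt N (gdel N j) k = if k = j then 1 else 0 := by
  unfold chiInt
  rw [Finset.sum_eq_single_of_mem (⟨_, pt_mem N j⟩ : ↥(squareDomain N)) (Finset.mem_attach _ _)]
  · show hfun N ((k:ℕ)+1) _ * gdel N j _ = _
    unfold gdel
    rw [if_pos rfl]
    have hd := hfun_delta N ((k:ℕ)+1) (((j:ℕ):ℤ)+1) (by omega)
      (by have := k.2; push_cast; omega) (by omega) (by have := j.2; push_cast; omega)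
    push_cast at hd
    rw [hd]
    have : (((k:ℕ):ℤ) + 1 = ((j:ℕ):ℤ) + 1) ↔ (k = j) := by
      constructor
      · intro h; apply Fin.ext; omega
      · intro h; rw [h]
    by_cases h : k = j
    · rw [if_pos (this.mpr h), if_pos h]; ring
    · rw [if_neg (fun hc => h (this.mp hc)), if_neg h]; ring
  · intro v _ hv
    unfold gdel
    rw [if_neg, mul_zero]
    intro hc
    exact hv (Subtype.ext hc)

lemma chiHom_surjective : Function.Surjective (chiHom N) := by
  intro t
  refine ⟨∑ j ∈ Finset.univ, ((t j).val : ℤ) • gdel N j, ?_⟩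
  rw [map_sum]
  funext k
  rw [Finset.sum_apply]
  have term : ∀ j ∈ Finset.univ, ((((t j).val : ℤ) • gdel N j) |> chiHom N) k
      = if k = j then (t j) else 0 := by
    intro j _
    rw [map_zsmul]
    show ((t j).val : ℤ) • ((chiInt N (gdel N j) k : ℤ) : ZMod 4) = _
    rw [chiInt_gdel]
    by_cases h : k = j
    · rw [if_pos h, if_pos h]
      push_cast
      simp [ZMod.natCast_val, ZMod.cast_id]
    · rw [if_neg h, if_neg h]
      push_cast
      simp
  rw [Finset.sum_congr rfl term, Finset.sum_ite_eq]
  simp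

lemma subgroup_iso_of_surjective (A H : Type) [AddCommGroup A] [Finite A]
    [AddCommGroup H] [Finite H] (φ : A →+ H) (hφ : Function.Surjective φ) :
    ∃ S : AddSubgroup A, Nonempty (↥S ≃+ H) := by
  classical
  let G' := Multiplicative A
  let H' := Multiplicative H
  haveI : NeZero ((Monoid.exponent G' : ℕ) : ℂ) :=
    ⟨Nat.cast_ne_zero.mpr Monoid.exponent_ne_zero_of_finite⟩
  haveI : NeZero ((Monoid.exponent H' : ℕ) : ℂ) :=
    ⟨Nat.cast_ne_zero.mpr Monoid.exponent_ne_zero_of_finite⟩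
  obtain ⟨dG⟩ := CommGroup.monoidHom_mulEquiv_of_hasEnoughRootsOfUnity G' ℂ
  obtain ⟨dH⟩ := CommGroup.monoidHom_mulEquiv_of_hasEnoughRootsOfUnity H' ℂ
  let φ' : G' →* H' := AddMonoidHom.toMultiplicative φ
  have hφ' : Function.Surjective φ' := hφ
  let pull : (H' →* ℂˣ) →* (G' →* ℂˣ) :=
    { toFun := fun χ => χ.comp φ'
      map_one' := by ext; rfl
      map_mul' := by intro χ χ'; ext; rfl }
  have hpull : Function.Injective pull := by
    intro χ χ' h
    ext x
    obtain ⟨g, rfl⟩ := hφ' x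
    exact congrArg Units.val (DFunLike.congr_fun h g)
  let ψ : H' →* G' := dG.toMonoidHom.comp (pull.comp dH.symm.toMonoidHom)
  have hψ : Function.Injective ψ :=
    fun x y h => dH.symm.injective (hpull (dG.injective h))
  let ψ' : H →+ A := AddMonoidHom.toMultiplicative.symm ψ
  have hψ' : Function.Injective ψ' := hψ
  exact ⟨ψ'.range, ⟨(AddMonoidHom.ofInjective hψ').symm⟩⟩


/-- For every `N ≥ 1`, the sandpile group on the `N×N` square
domain contains a subgroup isomorphic to the direct sum of `N` copies of `ℤ/4ℤ`. -/
theorem square_has_Z4_powers (N : ℕ) (hN : 1 ≤ N) :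
    ∃ S : AddSubgroup (SandpileGroup (squareDomain N)),
      Nonempty (↥S ≃+ (Fin N → ZMod 4)) := by
  classical
  haveI : Finite (SandpileGroup (squareDomain N)) := sandpile_finite N hN
  have hvanish : ∀ f ∈ (lapHom (squareDomain N)).range, chiHom N f = 0 := by
    rintro f ⟨g, rfl⟩
    exact chiHom_lap N g
  let φ : SandpileGroup (squareDomain N) →+ (Fin N → ZMod 4) :=
    QuotientAddGroup.lift (lapHom (squareDomain N)).range (chiHom N) hvanish
  have hφ : Function.Surjective φ := by
    intro t
    obtain ⟨f, hf⟩ := chiHom_surjective N t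
    exact ⟨QuotientAddGroup.mk f, hf⟩
  exact subgroup_iso_of_surjective _ _ φ hφ
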